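/- Let n ≥ 2 and K a field. If N is an n×n matrix over K with rank N < n (i.e., N is singular and possibly zero), then there exists an n×n matrix A such that A + λN is invertible for every λ ∈ K. -/

import Mathlib

open Matrix
open Fin.CommRing

namespace Stmt2Aux

variable {K : Type*} [Field K] {n : ℕ} [NeZero n]

/-- shift matrix: 1 at positions (i, i+1) -/
def Q (n : ℕ) (K : Type*) [Field K] [NeZero n] : Matrix (Fin n) (Fin n) K :=
  Matrix.of fun i k => if k = i + 1 then 1 else 0

/-- inverse shift matrix -/
def Q' (n : ℕ) (K : Type*) [Field K] [NeZero n] : Matrix (Fin n) (Fin n) K :=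
  Matrix.of fun i k => if i = k + 1 then 1 else 0

/-- shifted diagonal matrix -/
def T (d : Fin n → K) : Matrix (Fin n) (Fin n) K :=
  Matrix.of fun i j => if i = j + 1 then d j else 0

lemma Q_mul_Q' : Q n K * Q' n K = 1 := by
  ext i j
  simp only [Q, Q', Matrix.mul_apply, Matrix.of_apply]
  rw [Finset.sum_eq_single (i + 1)]
  · rw [if_pos rfl, one_mul, Matrix.one_apply]
    by_cases h : i = j
    · rw [if_pos (by rw [h]), if_pos h]
    · rw [if_neg (fun hh => h (add_right_cancel hh)), if_neg h]
  · intro b _ hb; rw [if_neg hb, zero_mul]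
  · simp

lemma Q'_mul_Q : Q' n K * Q n K = 1 := by
  ext i j
  simp only [Q, Q', Matrix.mul_apply, Matrix.of_apply]
  rw [Finset.sum_eq_single (i - 1)]
  · rw [if_pos (by ring_nf), one_mul, Matrix.one_apply]
    by_cases h : i = j
    · rw [if_pos (by rw [← h]; ring), if_pos h]
    · rw [if_neg, if_neg h]
      intro hj; exact h (by rw [hj]; ring)
  · intro b _ hb
    rw [if_neg, zero_mul]
    intro hh; exact hb (by rw [hh]; ring)
  · simp

lemma isUnit_Q : IsUnit (Q n K) :=
  ⟨⟨Q n K, Q' n K, Q_mul_Q', Q'_mul_Q⟩, rfl⟩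

lemma Q_mul_T (d : Fin n → K) : Q n K * T d = diagonal d := by
  ext i j
  simp only [Q, T, Matrix.mul_apply, Matrix.of_apply]
  rw [Finset.sum_eq_single (i + 1)]
  · rw [if_pos rfl, one_mul, Matrix.diagonal_apply]
    by_cases h : i = j
    · rw [if_pos (by rw [h]), if_pos h, h]
    · rw [if_neg (fun hh => h (add_right_cancel hh)), if_neg h]
  · intro b _ hb; rw [if_neg hb, zero_mul]
  · simp

lemma T_pow (d : Fin n → K) (k : ℕ) :
    (T d) ^ k = Matrix.of fun i j =>
      if i = j + (k : Fin n) then ∏ m ∈ Finset.range k, d (j + (m : Fin n)) else 0 := by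
  induction k with
  | zero =>
    ext i j
    simp [Matrix.one_apply]
  | succ k ih =>
    rw [pow_succ, ih]
    ext i j
    simp only [Matrix.mul_apply, Matrix.of_apply, T]
    rw [Finset.sum_eq_single (j + 1)]
    · rw [if_pos rfl]
      have hc : ((k + 1 : ℕ) : Fin n) = (k : Fin n) + 1 := by push_cast; ring
      have harr : j + ((k + 1 : ℕ) : Fin n) = (j + 1) + (k : Fin n) := by rw [hc]; ring
      by_cases h : i = j + ((k + 1 : ℕ) : Fin n)
      · rw [if_pos h, if_pos (by rw [← harr]; exact h)]
        rw [Finset.prod_range_succ']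
        have hm : ∀ m : ℕ, j + ((m + 1 : ℕ) : Fin n) = (j + 1) + (m : Fin n) := by
          intro m; push_cast; ring
        simp only [hm, Nat.cast_zero, add_zero]
      · rw [if_neg h, if_neg (fun hh => h (by rw [harr]; exact hh)), zero_mul]
    · intro b _ hb; rw [if_neg hb, mul_zero]
    · simp

lemma T_nilpotent (d : Fin n → K) (j₀ : Fin n) (h : d j₀ = 0) : (T d) ^ n = 0 := by
  rw [T_pow]
  ext i j
  simp only [Matrix.of_apply, Matrix.zero_apply]
  split
  · apply Finset.prod_eq_zero (i := (j₀ - j).val)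
    · simp [Finset.mem_range, Fin.is_lt]
    · rw [Fin.cast_val_eq_self]
      rw [show j + (j₀ - j) = j₀ by ring]
      exact h
  · rfl

end Stmt2Aux

theorem stmt2 (K : Type*) [Field K] (n : ℕ) (hn : 2 ≤ n)
    (N : Matrix (Fin n) (Fin n) K) (hN : N.rank < n) :
    ∃ A : Matrix (Fin n) (Fin n) K, ∀ lam : K, IsUnit (A + lam • N) := by
  classical
  haveI : NeZero n := ⟨by omega⟩
  obtain ⟨L, L', d, hNd⟩ := Matrix.Pivot.exists_list_transvec_mul_diagonal_mul_list_transvec N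
  set P1 := (L.map Matrix.TransvectionStruct.toMatrix).prod with hP1
  set P2 := (L'.map Matrix.TransvectionStruct.toMatrix).prod with hP2
  have hu1 : IsUnit P1.det := by rw [hP1, Matrix.TransvectionStruct.det_toMatrix_prod]; exact isUnit_one
  have hu2 : IsUnit P2.det := by rw [hP2, Matrix.TransvectionStruct.det_toMatrix_prod]; exact isUnit_one
  -- find a zero diagonal entry
  have hrank : (Matrix.diagonal d).rank = N.rank := by
    rw [hNd, Matrix.mul_assoc, Matrix.rank_mul_eq_right_of_isUnit_det _ _ hu1,
      Matrix.rank_mul_eq_left_of_isUnit_det _ _ hu2]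
  obtain ⟨j₀, hj₀⟩ : ∃ j₀, d j₀ = 0 := by
    by_contra h
    push_neg at h
    have hcard : Fintype.card {i // d i ≠ 0} = n := by
      rw [Fintype.card_eq.mpr ⟨Equiv.subtypeUnivEquiv h⟩, Fintype.card_fin]
    rw [Matrix.rank_diagonal, hcard] at hrank
    omega
  -- the nilpotent replacement
  have hQT := Stmt2Aux.Q_mul_T d
  refine ⟨P1 * Stmt2Aux.Q n K * P2, fun lam => ?_⟩
  have key : P1 * Stmt2Aux.Q n K * P2 + lam • N
      = (P1 * Stmt2Aux.Q n K) * ((1 + lam • Stmt2Aux.T d) * P2) := by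
    rw [hNd, ← hQT]
    simp only [Matrix.mul_add, Matrix.add_mul, Matrix.one_mul, Matrix.mul_one,
      Matrix.mul_smul, Matrix.smul_mul, Matrix.mul_assoc]
  rw [key]
  have hnil : IsNilpotent (lam • Stmt2Aux.T d) :=
    ⟨n, by rw [smul_pow, Stmt2Aux.T_nilpotent d j₀ hj₀, smul_zero]⟩
  exact ((((Matrix.isUnit_iff_isUnit_det _).mpr hu1).mul Stmt2Aux.isUnit_Q).mul
    (hnil.isUnit_one_add.mul ((Matrix.isUnit_iff_isUnit_det _).mpr hu2)))
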